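/- Fix κ ≥ 0 and let A ∈ C²(ℝ, M²) be the solution of the initial value problem Ä + κA = Λ(A,Ȧ)·cof A with data (A₀,B₀) ∈ D satisfying |A₀|² > 2, and set Xᵢ = Xᵢ(A₀,B₀). Then |A(t)| = |A₀| for all t ∈ ℝ (A is rigid) if and only if both X₁ = ½( X₂²/(½|A₀|²−1) + X₃²/(½|A₀|²+1) ) + (κ/2)|A₀|² and X₂²/(½|A₀|²−1)² + X₃²/(½|A₀|²+1)² = 2κ hold. -/

import Mathlib

open Matrix

noncomputable section

/-- `M²`: the space of 2×2 real matrices. -/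
abbrev M2 : Type := Matrix (Fin 2) (Fin 2) ℝ

/-- Frobenius inner product `⟨A,B⟩ = tr(AᵀB)`. -/
def mip (A B : M2) : ℝ := (Aᵀ * B).trace

/-- Frobenius norm `|A| = ⟨A,A⟩^{1/2}`. -/
def fnorm (A : M2) : ℝ := Real.sqrt (mip A A)

/-- The matrix Z = [[0,−1],[1,0]]. -/
def Zm : M2 := !![0, -1; 1, 0]

/-- The matrix K = [[1,0],[0,−1]]. -/
def Km : M2 := !![1, 0; 0, -1]

/-- The matrix M = [[0,1],[1,0]]. -/
def Mm : M2 := !![0, 1; 1, 0]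

/-- Cofactor: cof [[a,b],[c,d]] = [[d,−c],[−b,a]]. -/
def cofm (A : M2) : M2 := !![A 1 1, -(A 1 0); -(A 0 1), A 0 0]

/-- Membership in SO(2,ℝ). -/
def isSO (U : M2) : Prop := U.det = 1 ∧ U⁻¹ = Uᵀ

/-- The rotation U(θ) = cos θ·I + sin θ·Z. -/
def Um (θ : ℝ) : M2 := Real.cos θ • (1 : M2) + Real.sin θ • Zm

/-- Invariant X₁(A,B) = ½|B|² + (κ/2)|A|². -/
def X1 (κ : ℝ) (A B : M2) : ℝ := (1/2) * mip B B + (κ/2) * mip A A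

/-- Invariant X₂(A,B) = ½⟨ZA − AZ, B⟩. -/
def X2 (A B : M2) : ℝ := (1/2) * mip (Zm * A - A * Zm) B

/-- Invariant X₃(A,B) = ½⟨ZA + AZ, B⟩. -/
def X3 (A B : M2) : ℝ := (1/2) * mip (Zm * A + A * Zm) B

/-- Lagrange multiplier Λ(A,B) = 2(κ − det B)/|A|². -/
def Lam (κ : ℝ) (A B : M2) : ℝ := 2 * (κ - B.det) / (mip A A)

attribute [local instance] Matrix.normedAddCommGroup Matrix.normedSpace



lemma mip_eq (A B : M2) : mip A B =
    A 0 0 * B 0 0 + A 0 1 * B 0 1 + A 1 0 * B 1 0 + A 1 1 * B 1 1 := by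
  simp [mip, Matrix.trace, Matrix.mul_apply, Fin.sum_univ_two, Matrix.transpose_apply,
    Matrix.diag]
  ring

lemma entry_mul (X Y : M2) (i j : Fin 2) :
    (X * Y) i j = X i 0 * Y 0 j + X i 1 * Y 1 j := by
  rw [Matrix.mul_apply, Fin.sum_univ_two]

lemma hasDerivAt_matrix {f : ℝ → M2} {f' : M2} {t : ℝ} :
    HasDerivAt f f' t ↔ ∀ i j, HasDerivAt (fun s => f s i j) (f' i j) t := by
  constructor
  · intro h i j
    exact (hasDerivAt_pi.1 (hasDerivAt_pi.1 h i) j)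
  · intro h
    exact hasDerivAt_pi.2 fun i => hasDerivAt_pi.2 fun j => h i j

lemma HasDerivAt.mip2 {F G : ℝ → M2} {F' G' : M2} {t : ℝ}
    (hF : HasDerivAt F F' t) (hG : HasDerivAt G G' t) :
    HasDerivAt (fun s => mip (F s) (G s)) (mip F' (G t) + mip (F t) G') t := by
  have hf := hasDerivAt_matrix.1 hF
  have hg := hasDerivAt_matrix.1 hG
  have : HasDerivAt (fun s => F s 0 0 * G s 0 0 + F s 0 1 * G s 0 1
      + F s 1 0 * G s 1 0 + F s 1 1 * G s 1 1)
      ((F' 0 0 * G t 0 0 + F t 0 0 * G' 0 0) + (F' 0 1 * G t 0 1 + F t 0 1 * G' 0 1)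
      + (F' 1 0 * G t 1 0 + F t 1 0 * G' 1 0) + (F' 1 1 * G t 1 1 + F t 1 1 * G' 1 1)) t :=
    ((((hf 0 0).mul (hg 0 0)).add ((hf 0 1).mul (hg 0 1))).add
      ((hf 1 0).mul (hg 1 0))).add ((hf 1 1).mul (hg 1 1))
  convert this using 1
  · funext s; rw [mip_eq]
  · rw [mip_eq, mip_eq]; ring

lemma HasDerivAt.det2 {F : ℝ → M2} {F' : M2} {t : ℝ} (hF : HasDerivAt F F' t) :
    HasDerivAt (fun s => (F s).det) (mip (cofm (F t)) F') t := by
  have hf := hasDerivAt_matrix.1 hF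
  have : HasDerivAt (fun s => F s 0 0 * F s 1 1 - F s 0 1 * F s 1 0)
      ((F' 0 0 * F t 1 1 + F t 0 0 * F' 1 1) - (F' 0 1 * F t 1 0 + F t 0 1 * F' 1 0)) t :=
    (((hf 0 0).mul (hf 1 1)).sub ((hf 0 1).mul (hf 1 0)))
  convert this using 1
  · funext s; rw [Matrix.det_fin_two]
  · rw [mip_eq]; simp [cofm]; ring

lemma HasDerivAt.matmul {F G : ℝ → M2} {F' G' : M2} {t : ℝ}
    (hF : HasDerivAt F F' t) (hG : HasDerivAt G G' t) :
    HasDerivAt (fun s => F s * G s) (F' * G t + F t * G') t := by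
  have hf := hasDerivAt_matrix.1 hF
  have hg := hasDerivAt_matrix.1 hG
  refine hasDerivAt_matrix.2 fun i j => ?_
  have : HasDerivAt (fun s => F s i 0 * G s 0 j + F s i 1 * G s 1 j)
      ((F' i 0 * G t 0 j + F t i 0 * G' 0 j) + (F' i 1 * G t 1 j + F t i 1 * G' 1 j)) t :=
    ((hf i 0).mul (hg 0 j)).add ((hf i 1).mul (hg 1 j))
  convert this using 1
  · funext s; rw [entry_mul]
  · simp [Matrix.add_apply, entry_mul]; ring

lemma HasDerivAt.cof2 {F : ℝ → M2} {F' : M2} {t : ℝ} (hF : HasDerivAt F F' t) :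
    HasDerivAt (fun s => cofm (F s)) (cofm F') t := by
  have hf := hasDerivAt_matrix.1 hF
  refine hasDerivAt_matrix.2 fun i j => ?_
  fin_cases i <;> fin_cases j <;> simp [cofm] <;>
    first
      | exact hf 1 1
      | exact (hf 1 0).neg
      | exact (hf 0 1).neg
      | exact hf 0 0

lemma HasDerivAt.smulmat {c : ℝ → ℝ} {F : ℝ → M2} {c' : ℝ} {F' : M2} {t : ℝ}
    (hc : HasDerivAt c c' t) (hF : HasDerivAt F F' t) :
    HasDerivAt (fun s => c s • F s) (c' • F t + c t • F') t := by
  have hf := hasDerivAt_matrix.1 hF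
  refine hasDerivAt_matrix.2 fun i j => ?_
  have := (hc.mul (hf i j))
  simpa [Matrix.add_apply, Matrix.smul_apply, smul_eq_mul, Pi.mul_def] using this

lemma Um_eq (θ : ℝ) : Um θ = !![Real.cos θ, -Real.sin θ; Real.sin θ, Real.cos θ] := by
  ext i j
  fin_cases i <;> fin_cases j <;>
    simp [Um, Zm, Matrix.add_apply, Matrix.smul_apply, Matrix.one_apply, smul_eq_mul]

lemma hasDerivAt_Um (c : ℝ) (t : ℝ) :
    HasDerivAt (fun s => Um (c * s)) (c • (Zm * Um (c * t))) t := by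
  have hmul : HasDerivAt (fun s : ℝ => c * s) c t := by
    simpa using (hasDerivAt_id t).const_mul c
  have hcos : HasDerivAt (fun s => Real.cos (c * s)) (-(c * Real.sin (c * t))) t := by
    have := (Real.hasDerivAt_cos (c * t)).comp t hmul
    simpa [Function.comp_def, mul_comm] using this
  have hsin : HasDerivAt (fun s => Real.sin (c * s)) (c * Real.cos (c * t)) t := by
    have := (Real.hasDerivAt_sin (c * t)).comp t hmul
    simpa [Function.comp_def, mul_comm] using this
  have h1 : c • (Zm * Um (c * t)) = !![-(c * Real.sin (c*t)), -(c * Real.cos (c*t));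
      c * Real.cos (c*t), -(c * Real.sin (c*t))] := by
    rw [Um_eq]
    ext i j
    fin_cases i <;> fin_cases j <;>
      simp [Zm, Matrix.smul_apply, entry_mul, smul_eq_mul] <;> ring
  rw [h1]
  refine hasDerivAt_matrix.2 fun i j => ?_
  have hfun : ∀ s, Um (c * s) = !![Real.cos (c*s), -Real.sin (c*s);
      Real.sin (c*s), Real.cos (c*s)] := fun s => Um_eq (c*s)
  fin_cases i <;> fin_cases j <;> simp only [hfun] <;> simp <;>
    first
      | exact hcos
      | exact hsin
      | exact hsin.neg
      | exact hcos.neg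

lemma gronwall_zero {E : Type*} [NormedAddCommGroup E] [NormedSpace ℝ E] {f f' : ℝ → E} {K : ℝ}
    {a b t₀ : ℝ} (hd : ∀ t ∈ Set.Icc a b, HasDerivAt f (f' t) t)
    (hbd : ∀ t ∈ Set.Icc a b, ‖f' t‖ ≤ K * ‖f t‖)
    (ht₀ : t₀ ∈ Set.Icc a b) (h0 : f t₀ = 0) : ∀ t ∈ Set.Icc a b, f t = 0 := by
  have key : ∀ t ∈ Set.Icc t₀ b, f t = 0 := by
    intro t ht
    have h := norm_le_gronwallBound_of_norm_deriv_right_le (f := f) (f' := f') (δ := 0)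
      (K := K) (ε := 0) (a := t₀) (b := b)
      (fun x hx => ((hd x ⟨le_trans ht₀.1 hx.1, hx.2⟩).continuousAt).continuousWithinAt)
      (fun x hx => (hd x ⟨le_trans ht₀.1 hx.1, hx.2.le⟩).hasDerivWithinAt)
      (by simp [h0]) (fun x hx => by
        simpa using hbd x ⟨le_trans ht₀.1 hx.1, hx.2.le⟩) t ht
    rw [gronwallBound_ε0_δ0] at h
    exact norm_le_zero_iff.1 h
  have key2 : ∀ t ∈ Set.Icc a t₀, f t = 0 := by
    intro t ht
    set g : ℝ → E := fun s => f (2 * t₀ - s) with hg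
    have hgd : ∀ s, s ∈ Set.Icc t₀ (2 * t₀ - a) → HasDerivAt g ((-1 : ℝ) • f' (2 * t₀ - s)) s := by
      intro s hs
      have hin : (2 * t₀ - s) ∈ Set.Icc a b := by
        constructor
        · linarith [hs.2]
        · have := hs.1; have := ht₀.2; linarith
      have hi : HasDerivAt (fun s : ℝ => 2 * t₀ - s) (-1 : ℝ) s := by
        exact (hasDerivAt_id' s).const_sub (2 * t₀)
      exact HasDerivAt.scomp s (hd _ hin) hi
    have h := norm_le_gronwallBound_of_norm_deriv_right_le (f := g)
      (f' := fun s => (-1 : ℝ) • f' (2 * t₀ - s)) (δ := 0) (K := K) (ε := 0)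
      (a := t₀) (b := 2 * t₀ - a)
      (fun x hx => ((hgd x hx).continuousAt).continuousWithinAt)
      (fun x hx => (hgd x ⟨hx.1, hx.2.le⟩).hasDerivWithinAt)
      (by simp only [hg]; rw [show 2 * t₀ - t₀ = t₀ by ring, h0]; simp) (fun x hx => by
        have hin : (2 * t₀ - x) ∈ Set.Icc a b := by
          constructor
          · linarith [hx.2]
          · have := hx.1; have := ht₀.2; linarith
        simpa [hg] using hbd _ hin) (2 * t₀ - t) ⟨by linarith [ht.2], by linarith [ht.1]⟩
    rw [gronwallBound_ε0_δ0] at h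
    have := norm_le_zero_iff.1 h
    simpa [hg] using this
  intro t ht
  rcases le_total t t₀ with h | h
  · exact key2 t ⟨ht.1, h⟩
  · exact key t ⟨h, ht.2⟩


lemma mip_comm (A B : M2) : mip A B = mip B A := by rw [mip_eq, mip_eq]; ring

lemma mip_self_nonneg (A : M2) : 0 ≤ mip A A := by
  rw [mip_eq]
  nlinarith [mul_self_nonneg (A 0 0), mul_self_nonneg (A 0 1), mul_self_nonneg (A 1 0),
    mul_self_nonneg (A 1 1)]

lemma mip_self_eq_zero {A : M2} (h : mip A A = 0) : A = 0 := by
  rw [mip_eq] at h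
  have n00 := mul_self_nonneg (A 0 0); have n01 := mul_self_nonneg (A 0 1)
  have n10 := mul_self_nonneg (A 1 0); have n11 := mul_self_nonneg (A 1 1)
  have e00 : A 0 0 = 0 := mul_self_eq_zero.1 (le_antisymm (by linarith) (mul_self_nonneg _))
  have e01 : A 0 1 = 0 := mul_self_eq_zero.1 (le_antisymm (by linarith) (mul_self_nonneg _))
  have e10 : A 1 0 = 0 := mul_self_eq_zero.1 (le_antisymm (by linarith) (mul_self_nonneg _))
  have e11 : A 1 1 = 0 := mul_self_eq_zero.1 (le_antisymm (by linarith) (mul_self_nonneg _))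
  ext i j
  fin_cases i <;> fin_cases j <;>
    first | exact e00 | exact e01 | exact e10 | exact e11

lemma two_det_le_mip (A : M2) : 2 * A.det ≤ mip A A := by
  rw [mip_eq, Matrix.det_fin_two]
  nlinarith [sq_nonneg (A 0 0 - A 1 1), sq_nonneg (A 0 1 + A 1 0)]

lemma mip_cof_self (A : M2) : mip (cofm A) A = 2 * A.det := by
  simp [mip_eq, cofm, Matrix.det_fin_two]; ring

lemma mip_self_cof (A : M2) : mip A (cofm A) = 2 * A.det := by
  simp [mip_eq, cofm, Matrix.det_fin_two]; ring

lemma mip_cof_cof (A : M2) : mip (cofm A) (cofm A) = mip A A := by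
  simp [mip_eq, cofm]; ring

lemma cofm_sub (X Y : M2) : cofm (X - Y) = cofm X - cofm Y := by
  ext i j
  fin_cases i <;> fin_cases j <;> simp [cofm, Matrix.sub_apply] <;> ring

lemma norm_cofm (X : M2) : ‖cofm X‖ = ‖X‖ := by
  apply le_antisymm
  · refine (Matrix.norm_le_iff (norm_nonneg X)).2 fun i j => ?_
    fin_cases i <;> fin_cases j <;>
      simp [cofm] <;> exact Matrix.norm_entry_le_entrywise_sup_norm X
  · refine (Matrix.norm_le_iff (norm_nonneg _)).2 fun i j => ?_
    have h00 : X 0 0 = cofm X 1 1 := by simp [cofm]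
    have h01 : X 0 1 = -(cofm X 1 0) := by simp [cofm]
    have h10 : X 1 0 = -(cofm X 0 1) := by simp [cofm]
    have h11 : X 1 1 = cofm X 0 0 := by simp [cofm]
    have b00 : ‖X 0 0‖ ≤ ‖cofm X‖ := by
      rw [h00]; exact Matrix.norm_entry_le_entrywise_sup_norm _
    have b01 : ‖X 0 1‖ ≤ ‖cofm X‖ := by
      rw [h01, norm_neg]; exact Matrix.norm_entry_le_entrywise_sup_norm _
    have b10 : ‖X 1 0‖ ≤ ‖cofm X‖ := by
      rw [h10, norm_neg]; exact Matrix.norm_entry_le_entrywise_sup_norm _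
    have b11 : ‖X 1 1‖ ≤ ‖cofm X‖ := by
      rw [h11]; exact Matrix.norm_entry_le_entrywise_sup_norm _
    fin_cases i <;> fin_cases j <;> first | exact b00 | exact b01 | exact b10 | exact b11

lemma abs_det_le (X : M2) : |X.det| ≤ 2 * ‖X‖^2 := by
  rw [Matrix.det_fin_two]
  have e : ∀ i j, |X i j| ≤ ‖X‖ := fun i j => Matrix.norm_entry_le_entrywise_sup_norm X
  have hn : (0:ℝ) ≤ ‖X‖ := norm_nonneg X
  calc |X 0 0 * X 1 1 - X 0 1 * X 1 0| ≤ |X 0 0 * X 1 1| + |X 0 1 * X 1 0| := abs_sub _ _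
    _ = |X 0 0| * |X 1 1| + |X 0 1| * |X 1 0| := by rw [abs_mul, abs_mul]
    _ ≤ ‖X‖ * ‖X‖ + ‖X‖ * ‖X‖ := add_le_add
        (mul_le_mul (e 0 0) (e 1 1) (abs_nonneg _) (norm_nonneg _))
        (mul_le_mul (e 0 1) (e 1 0) (abs_nonneg _) (norm_nonneg _))
    _ = 2 * ‖X‖^2 := by ring

lemma mip_self_le (X : M2) : mip X X ≤ 4 * ‖X‖^2 := by
  rw [mip_eq]
  have e : ∀ i j, |X i j| ≤ ‖X‖ := fun i j => Matrix.norm_entry_le_entrywise_sup_norm X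
  have h : ∀ i j : Fin 2, X i j * X i j ≤ ‖X‖^2 := by
    intro i j
    have h1 := e i j
    calc X i j * X i j = |X i j| * |X i j| := (abs_mul_abs_self _).symm
      _ ≤ ‖X‖ * ‖X‖ := mul_le_mul h1 h1 (abs_nonneg _) (norm_nonneg _)
      _ = ‖X‖^2 := (sq ‖X‖).symm
  nlinarith [h 0 0, h 0 1, h 1 0, h 1 1]

lemma prod_diff_bound {x w y z r d : ℝ} (hx : |x| ≤ r) (hw : |w| ≤ r) (hy : |y| ≤ r)
    (hz : |z| ≤ r) (hxy : |x - y| ≤ d) (hwz : |w - z| ≤ d) : |x*w - y*z| ≤ 2*r*d := by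
  have h : x*w - y*z = x*(w-z) + z*(x-y) := by ring
  rw [h]
  calc |x*(w-z) + z*(x-y)| ≤ |x*(w-z)| + |z*(x-y)| := abs_add_le _ _
    _ = |x| * |w-z| + |z| * |x-y| := by rw [abs_mul, abs_mul]
    _ ≤ r*d + r*d := add_le_add
        (mul_le_mul hx hwz (abs_nonneg _) ((abs_nonneg x).trans hx))
        (mul_le_mul hz hxy (abs_nonneg _) ((abs_nonneg z).trans hz))
    _ = 2*r*d := by ring

lemma det_diff_bound {X Y : M2} {r : ℝ} (hX : ‖X‖ ≤ r) (hY : ‖Y‖ ≤ r) :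
    |X.det - Y.det| ≤ 4*r*‖X - Y‖ := by
  have e : ∀ (W : M2) i j, |W i j| ≤ ‖W‖ := fun W i j => Matrix.norm_entry_le_entrywise_sup_norm W
  have eX : ∀ i j, |X i j| ≤ r := fun i j => (e X i j).trans hX
  have eY : ∀ i j, |Y i j| ≤ r := fun i j => (e Y i j).trans hY
  have eD : ∀ i j, |X i j - Y i j| ≤ ‖X - Y‖ := by
    intro i j
    have := e (X - Y) i j
    simpa [Matrix.sub_apply] using this
  have h1 : |X 0 0 * X 1 1 - Y 0 0 * Y 1 1| ≤ 2*r*‖X-Y‖ :=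
    prod_diff_bound (eX 0 0) (eX 1 1) (eY 0 0) (eY 1 1) (eD 0 0) (eD 1 1)
  have h2 : |X 0 1 * X 1 0 - Y 0 1 * Y 1 0| ≤ 2*r*‖X-Y‖ :=
    prod_diff_bound (eX 0 1) (eX 1 0) (eY 0 1) (eY 1 0) (eD 0 1) (eD 1 0)
  rw [Matrix.det_fin_two, Matrix.det_fin_two]
  obtain ⟨l1, r1⟩ := abs_le.1 h1
  obtain ⟨l2, r2⟩ := abs_le.1 h2
  rw [abs_le]
  constructor <;> linarith

lemma mip_diff_bound {X Y : M2} {r : ℝ} (hX : ‖X‖ ≤ r) (hY : ‖Y‖ ≤ r) :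
    |mip X X - mip Y Y| ≤ 8*r*‖X - Y‖ := by
  have e : ∀ (W : M2) i j, |W i j| ≤ ‖W‖ := fun W i j => Matrix.norm_entry_le_entrywise_sup_norm W
  have eX : ∀ i j, |X i j| ≤ r := fun i j => (e X i j).trans hX
  have eY : ∀ i j, |Y i j| ≤ r := fun i j => (e Y i j).trans hY
  have eD : ∀ i j, |X i j - Y i j| ≤ ‖X - Y‖ := by
    intro i j
    have := e (X - Y) i j
    simpa [Matrix.sub_apply] using this
  have h : ∀ i j : Fin 2, |X i j * X i j - Y i j * Y i j| ≤ 2*r*‖X-Y‖ := fun i j =>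
    prod_diff_bound (eX i j) (eX i j) (eY i j) (eY i j) (eD i j) (eD i j)
  rw [mip_eq, mip_eq, abs_le]
  constructor <;>
    linarith [abs_le.1 (h 0 0), abs_le.1 (h 0 1), abs_le.1 (h 1 0), abs_le.1 (h 1 1)]

lemma Um_zero : Um 0 = 1 := by
  ext i j
  fin_cases i <;> fin_cases j <;>
    simp [Um, Zm, Matrix.add_apply, Matrix.smul_apply, Matrix.one_apply]

lemma Um_comm_Zm (θ : ℝ) : Um θ * Zm = Zm * Um θ := by
  ext i j
  fin_cases i <;> fin_cases j <;>
    simp [Um_eq, Zm, entry_mul, Matrix.vecMul, dotProduct, Fin.sum_univ_two] <;> ring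

lemma mip_UmL (θ : ℝ) (X : M2) : mip (Um θ * X) (Um θ * X) = mip X X := by
  simp [mip_eq, Um_eq, entry_mul, Matrix.vecMul, dotProduct, Fin.sum_univ_two]
  linear_combination (X 0 0^2 + X 0 1^2 + X 1 0^2 + X 1 1^2) * Real.sin_sq_add_cos_sq θ

lemma mip_UmR (θ : ℝ) (X : M2) : mip (X * Um θ) (X * Um θ) = mip X X := by
  simp [mip_eq, Um_eq, entry_mul, Matrix.vecMul, dotProduct, Fin.sum_univ_two]
  linear_combination (X 0 0^2 + X 0 1^2 + X 1 0^2 + X 1 1^2) * Real.sin_sq_add_cos_sq θ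

lemma det_Um (θ : ℝ) : (Um θ).det = 1 := by
  rw [Um_eq, Matrix.det_fin_two]
  simp
  linear_combination Real.sin_sq_add_cos_sq θ


lemma mip_smul_sub (X Y Z : M2) (r s : ℝ) :
    mip X (r • Y - s • Z) = r * mip X Y - s * mip X Z := by
  simp [mip_eq, Matrix.sub_apply, Matrix.smul_apply, smul_eq_mul]; ring

lemma lagrange_plus (A B : M2) :
    (1/2 * mip A A + A.det) * (1/2 * mip B B + B.det)
      = 1/4 * (mip A B + mip (cofm A) B)^2 + ((1/2) * mip (Zm * A + A * Zm) B)^2 := by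
  simp [mip_eq, Matrix.det_fin_two, cofm, Zm, Matrix.mul_apply, Matrix.vecMul,
    dotProduct, Fin.sum_univ_two]
  ring

lemma lagrange_minus (A B : M2) :
    (1/2 * mip A A - A.det) * (1/2 * mip B B - B.det)
      = 1/4 * (mip A B - mip (cofm A) B)^2 + ((1/2) * mip (Zm * A - A * Zm) B)^2 := by
  simp [mip_eq, Matrix.det_fin_two, cofm, Zm, Matrix.mul_apply, Matrix.vecMul,
    dotProduct, Fin.sum_univ_two]
  ring

lemma zmz_cof (X : M2) : Zm * X * Zm = -cofm X := by
  ext i j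
  fin_cases i <;> fin_cases j <;>
    simp [Zm, cofm, Matrix.mul_apply, Matrix.vecMul, dotProduct, Fin.sum_univ_two,
      Matrix.neg_apply] <;> ring

lemma det_comb (a b : ℝ) (X : M2) :
    (a • (Zm * X) + b • (X * Zm)).det = (a^2+b^2) * X.det + a*b * mip X X := by
  simp [Matrix.det_fin_two, mip_eq, Zm, Matrix.mul_apply, Matrix.vecMul, dotProduct,
    Fin.sum_univ_two, Matrix.add_apply, Matrix.smul_apply, smul_eq_mul]
  ring

lemma Lam_abs_le {κ : ℝ} (hκ : 0 ≤ κ) {X Y : M2} (h2 : 2 ≤ mip X X) :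
    |Lam κ X Y| ≤ κ + 2*‖Y‖^2 := by
  rw [Lam, abs_div]
  have hd := abs_det_le Y
  have hnum : |2 * (κ - Y.det)| ≤ 2*(κ + 2*‖Y‖^2) := by
    rw [abs_mul]
    have : |κ - Y.det| ≤ κ + 2*‖Y‖^2 := by
      cases' abs_le.1 hd with h1 h2
      rw [abs_le]; constructor <;> simp <;> linarith
    calc |(2:ℝ)| * |κ - Y.det| = 2 * |κ - Y.det| := by norm_num
      _ ≤ 2*(κ + 2*‖Y‖^2) := by linarith
  have hden : |mip X X| = mip X X := abs_of_nonneg (by linarith)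
  rw [hden]
  calc |2 * (κ - Y.det)| / mip X X ≤ (2*(κ + 2*‖Y‖^2)) / 2 :=
      div_le_div₀ (by positivity) hnum (by norm_num) h2
    _ = κ + 2*‖Y‖^2 := by ring

lemma Lam_diff_le {κ R : ℝ} (hκ : 0 ≤ κ) (hR : 1 ≤ R) {X Y Xr Yr : M2}
    (h2X : 2 ≤ mip X X) (h2Xr : 2 ≤ mip Xr Xr)
    (hX : ‖X‖ ≤ R) (hXr : ‖Xr‖ ≤ R) (hY : ‖Y‖ ≤ R) (hYr : ‖Yr‖ ≤ R) :
    |Lam κ X Y - Lam κ Xr Yr| ≤ 8*R^3*‖Y - Yr‖ + 4*R*(κ+2*R^2)*‖X - Xr‖ := by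
  have hm0 : mip X X ≠ 0 := by linarith
  have hmr0 : mip Xr Xr ≠ 0 := by linarith
  have key : Lam κ X Y - Lam κ Xr Yr
      = (2*(mip Xr Xr)*(Yr.det - Y.det) + 2*(κ - Yr.det)*((mip Xr Xr) - (mip X X)))
        / ((mip X X)*(mip Xr Xr)) := by
    rw [Lam, Lam]; field_simp; ring
  rw [key, abs_div]
  have hR0 : (0:ℝ) ≤ R := by linarith
  have hmrle : mip Xr Xr ≤ 4*R^2 := by
    have := mip_self_le Xr
    nlinarith [norm_nonneg Xr]
  have hdiff1 : |Yr.det - Y.det| ≤ 4*R*‖Y - Yr‖ := by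
    rw [abs_sub_comm]; exact det_diff_bound hY hYr
  have hdiff2 : |mip Xr Xr - mip X X| ≤ 8*R*‖X - Xr‖ := by
    rw [abs_sub_comm]; exact mip_diff_bound hX hXr
  have hkd : |κ - Yr.det| ≤ κ + 2*R^2 := by
    have hd := abs_le.1 (abs_det_le Yr)
    have h2 : ‖Yr‖^2 ≤ R^2 := by nlinarith [norm_nonneg Yr]
    rw [abs_le]
    constructor
    · linarith [hd.2]
    · linarith [hd.1]
  have t1 : |2*(mip Xr Xr)*(Yr.det - Y.det)| ≤ 32*R^3*‖Y - Yr‖ := by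
    rw [abs_mul, abs_mul, abs_two, abs_of_nonneg (mip_self_nonneg Xr)]
    have hb : (mip Xr Xr) * |Yr.det - Y.det| ≤ (4*R^2) * (4*R*‖Y - Yr‖) :=
      mul_le_mul hmrle hdiff1 (abs_nonneg _) (by positivity)
    calc 2 * mip Xr Xr * |Yr.det - Y.det| = 2 * (mip Xr Xr * |Yr.det - Y.det|) := by ring
      _ ≤ 2 * ((4*R^2) * (4*R*‖Y - Yr‖)) := by linarith
      _ = 32*R^3*‖Y - Yr‖ := by ring
  have t2 : |2*(κ - Yr.det)*((mip Xr Xr) - (mip X X))| ≤ 16*R*(κ+2*R^2)*‖X - Xr‖ := by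
    rw [abs_mul, abs_mul, abs_two]
    have hb : |κ - Yr.det| * |mip Xr Xr - mip X X| ≤ (κ+2*R^2) * (8*R*‖X - Xr‖) :=
      mul_le_mul hkd hdiff2 (abs_nonneg _) (by positivity)
    calc 2 * |κ - Yr.det| * |mip Xr Xr - mip X X|
        = 2 * (|κ - Yr.det| * |mip Xr Xr - mip X X|) := by ring
      _ ≤ 2 * ((κ+2*R^2) * (8*R*‖X - Xr‖)) := by linarith
      _ = 16*R*(κ+2*R^2)*‖X - Xr‖ := by ring
  have hnum : |2*(mip Xr Xr)*(Yr.det - Y.det) + 2*(κ - Yr.det)*((mip Xr Xr) - (mip X X))|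
      ≤ 32*R^3*‖Y - Yr‖ + 16*R*(κ+2*R^2)*‖X - Xr‖ := by
    have := abs_add_le (2*(mip Xr Xr)*(Yr.det - Y.det))
      (2*(κ - Yr.det)*((mip Xr Xr) - (mip X X)))
    linarith
  have hden : (4:ℝ) ≤ |mip X X * mip Xr Xr| := by
    rw [abs_of_nonneg (by nlinarith)]
    nlinarith
  have hq : |2*(mip Xr Xr)*(Yr.det - Y.det) + 2*(κ - Yr.det)*((mip Xr Xr) - (mip X X))|
        / |mip X X * mip Xr Xr|
      ≤ (32*R^3*‖Y - Yr‖ + 16*R*(κ+2*R^2)*‖X - Xr‖) / 4 :=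
    div_le_div₀ (by positivity) hnum (by norm_num) hden
  linarith


set_option maxHeartbeats 1000000 in
lemma Eexp (X Y : M2) (p q : ℝ) (hd : X.det = 1) :
    mip (Y - ((p+q)/2) • (Zm * X) - ((p-q)/2) • (X * Zm))
        (Y - ((p+q)/2) • (Zm * X) - ((p-q)/2) • (X * Zm))
      = mip Y Y - 2*p*((1/2) * mip (Zm * X + X * Zm) Y) - 2*q*((1/2) * mip (Zm * X - X * Zm) Y)
        + p^2*((1/2) * mip X X + 1) + q^2*((1/2) * mip X X - 1) := by
  have hd' : X 0 0 * X 1 1 - X 0 1 * X 1 0 = 1 := by rw [← Matrix.det_fin_two]; exact hd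
  simp [mip_eq, Zm, Matrix.mul_apply, Matrix.vecMul, dotProduct, Fin.sum_univ_two,
    Matrix.sub_apply, Matrix.add_apply, Matrix.smul_apply, smul_eq_mul]
  linear_combination (p^2 - q^2) * hd'

set_option maxHeartbeats 1000000 in
lemma Ar_deriv_eq (a b s : ℝ) (X : M2) :
    (a • (Zm * Um (a*s)) * X + Um (a*s) * 0) * Um (b*s) + (Um (a*s) * X) * (b • (Zm * Um (b*s)))
    = a • (Zm * (Um (a*s) * X * Um (b*s))) + b • ((Um (a*s) * X * Um (b*s)) * Zm) := by
  ext i j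
  fin_cases i <;> fin_cases j <;>
    simp [Um_eq, Zm, Matrix.mul_apply, Matrix.vecMul, dotProduct, Fin.sum_univ_two,
      Matrix.smul_apply, Matrix.add_apply, smul_eq_mul] <;> ring

set_option maxHeartbeats 1000000 in
lemma Arp_eq (a b s : ℝ) (X : M2) :
    a • (Zm * (Um (a*s) * X * Um (b*s))) + b • ((Um (a*s) * X * Um (b*s)) * Zm)
    = Um (a*s) * (a • (Zm * X) + b • (X * Zm)) * Um (b*s) := by
  ext i j
  fin_cases i <;> fin_cases j <;>
    simp [Um_eq, Zm, Matrix.mul_apply, Matrix.vecMul, dotProduct, Fin.sum_univ_two,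
      Matrix.smul_apply, Matrix.add_apply, smul_eq_mul] <;> ring

set_option maxHeartbeats 1000000 in
lemma Arpp_eq (a b : ℝ) (Y : M2) :
    -(a^2+b^2) • Y + (2*a*b) • (Zm * Y * Zm)
    = ((0:ℝ) • (Zm * Y) + a • ((0:M2) * Y + Zm * (a • (Zm * Y) + b • (Y * Zm))))
      + ((0:ℝ) • (Y * Zm) + b • ((a • (Zm * Y) + b • (Y * Zm)) * Zm + Y * (0:M2))) := by
  ext i j
  fin_cases i <;> fin_cases j <;>
    simp [Zm, Matrix.mul_apply, Matrix.vecMul, dotProduct, Fin.sum_univ_two,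
      Matrix.smul_apply, Matrix.add_apply, Matrix.neg_apply, Matrix.zero_apply,
      smul_eq_mul] <;> ring

set_option maxHeartbeats 2000000 in
/-- characterization of rigid solutions with |A₀|² > 2. -/
theorem rigid_iff (κ : ℝ) (hκ : 0 ≤ κ) (A₀ B₀ : M2)
    (hdet : A₀.det = 1) (htan : mip B₀ (cofm A₀) = 0) (hA₀ : 2 < mip A₀ A₀)
    (A : ℝ → M2) (hA : ContDiff ℝ 2 A)
    (hA0 : A 0 = A₀) (hB0 : deriv A 0 = B₀)
    (hode : ∀ t : ℝ, deriv (deriv A) t + κ • A t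
      = Lam κ (A t) (deriv A t) • cofm (A t)) :
    (∀ t : ℝ, fnorm (A t) = fnorm A₀) ↔
      (X1 κ A₀ B₀ = (1/2) * (X2 A₀ B₀ ^ 2 / ((1/2) * mip A₀ A₀ - 1)
          + X3 A₀ B₀ ^ 2 / ((1/2) * mip A₀ A₀ + 1)) + (κ/2) * mip A₀ A₀ ∧
        X2 A₀ B₀ ^ 2 / ((1/2) * mip A₀ A₀ - 1) ^ 2
          + X3 A₀ B₀ ^ 2 / ((1/2) * mip A₀ A₀ + 1) ^ 2 = 2 * κ) := by
  -- ## Setup: derivatives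
  set B := deriv A with hBdef
  set C := deriv B with hCdef
  have hA2 : ContDiff ℝ (1+1) A := by
    rw [one_add_one_eq_two]; exact hA
  have hAd : Differentiable ℝ A := hA2.differentiable (by norm_num)
  have hB1 : ContDiff ℝ 1 B := by
    rw [hBdef]; exact (contDiff_succ_iff_deriv.1 hA2).2.2
  have hBd : Differentiable ℝ B := hB1.differentiable one_ne_zero
  have hAt : ∀ t, HasDerivAt A (B t) t := by
    intro t
    have := (hAd t).hasDerivAt
    exact this
  have hBt : ∀ t, HasDerivAt B (C t) t := by
    intro t
    have := (hBd t).hasDerivAt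
    exact this
  have hCval : ∀ t, C t = Lam κ (A t) (B t) • cofm (A t) - κ • A t := fun t =>
    eq_sub_of_add_eq (hode t)
  have hmt : ∀ t, HasDerivAt (fun s => mip (A s) (A s)) (2 * mip (A t) (B t)) t := by
    intro t
    have h := (hAt t).mip2 (hAt t)
    rw [mip_comm (B t) (A t)] at h
    rw [two_mul]
    exact h
  have hdt : ∀ t, HasDerivAt (fun s => (A s).det) (mip (cofm (A t)) (B t)) t :=
    fun t => (hAt t).det2
  have hct : ∀ t, HasDerivAt (fun s => mip (cofm (A s)) (B s))
      (mip (cofm (B t)) (B t) + mip (cofm (A t)) (C t)) t :=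
    fun t => ((hAt t).cof2).mip2 (hBt t)
  have hut : ∀ t, HasDerivAt (fun s => mip (A s) (B s))
      (mip (B t) (B t) + mip (A t) (C t)) t := fun t => (hAt t).mip2 (hBt t)
  clear_value B C
  -- ## det (A t) = 1 for all t, via a clopen argument with Gronwall
  have hS : ∀ t, (A t).det = 1 ∧ mip (cofm (A t)) (B t) = 0 := by
    have hdc : Continuous fun t => (A t).det :=
      continuous_iff_continuousAt.2 fun t => (hdt t).continuousAt
    have hcc : Continuous fun t => mip (cofm (A t)) (B t) :=
      continuous_iff_continuousAt.2 fun t => (hct t).continuousAt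
    have hmcont : Continuous fun t => mip (A t) (A t) :=
      continuous_iff_continuousAt.2 fun t => (hmt t).continuousAt
    have hclosed : IsClosed {t : ℝ | (A t).det = 1 ∧ mip (cofm (A t)) (B t) = 0} :=
      (isClosed_eq hdc continuous_const).inter (isClosed_eq hcc continuous_const)
    have hopen : IsOpen {t : ℝ | (A t).det = 1 ∧ mip (cofm (A t)) (B t) = 0} := by
      rw [Metric.isOpen_iff]
      intro t₀ ht₀
      have hm2 : (2:ℝ) ≤ mip (A t₀) (A t₀) := by
        have h := two_det_le_mip (A t₀)
        rw [ht₀.1] at h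
        linarith
      have hUopen : IsOpen {t : ℝ | 0 < mip (A t) (A t)} := isOpen_lt continuous_const hmcont
      obtain ⟨ε, hε, hball⟩ := Metric.isOpen_iff.1 hUopen t₀ (by
        show 0 < mip (A t₀) (A t₀); linarith)
      refine ⟨ε/2, by positivity, fun x hx => ?_⟩
      have hIccsub : ∀ s ∈ Set.Icc (t₀ - ε/2) (t₀ + ε/2), 0 < mip (A s) (A s) := by
        intro s hs
        apply hball
        rw [Metric.mem_ball, Real.dist_eq, abs_sub_lt_iff]
        constructor <;> [linarith [hs.2]; linarith [hs.1]]
      have hFd : ∀ s ∈ Set.Icc (t₀ - ε/2) (t₀ + ε/2),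
          HasDerivAt (fun r => ((A r).det - 1, mip (cofm (A r)) (B r)))
            ((fun s => (mip (cofm (A s)) (B s), -(2*κ) * ((A s).det - 1))) s) s := by
        intro s hs
        have hms := hIccsub s hs
        have he : mip (cofm (B s)) (B s) + mip (cofm (A s)) (C s)
            = -(2*κ) * ((A s).det - 1) := by
          rw [hCval s, mip_smul_sub, mip_cof_cof, mip_cof_self]
          have hLm : Lam κ (A s) (B s) * mip (A s) (A s) = 2*(κ - (B s).det) := by
            rw [Lam]; field_simp
          have hca := mip_cof_self (A s)
          linear_combination hLm - κ * hca
        have h2 := hct s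
        rw [he] at h2
        exact ((hdt s).sub_const 1).prodMk h2
      have hFb : ∀ s ∈ Set.Icc (t₀ - ε/2) (t₀ + ε/2),
          ‖(fun s => (mip (cofm (A s)) (B s), -(2*κ) * ((A s).det - 1))) s‖
            ≤ (2*κ+1) * ‖((A s).det - 1, mip (cofm (A s)) (B s))‖ := by
        intro s _
        rw [Prod.norm_def, Prod.norm_def]
        simp only [Real.norm_eq_abs]
        have hmx0 : (0:ℝ) ≤ max |(A s).det - 1| |mip (cofm (A s)) (B s)| :=
          le_trans (abs_nonneg _) (le_max_left _ _)
        apply max_le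
        · have h1 := le_max_right |(A s).det - 1| |mip (cofm (A s)) (B s)|
          nlinarith
        · rw [abs_mul, abs_neg, abs_of_nonneg (by linarith : (0:ℝ) ≤ 2*κ)]
          have h1 := le_max_left |(A s).det - 1| |mip (cofm (A s)) (B s)|
          nlinarith [abs_nonneg ((A s).det - 1)]
      have ht₀mem : t₀ ∈ Set.Icc (t₀ - ε/2) (t₀ + ε/2) := by
        constructor <;> linarith
      have hF0 : ((A t₀).det - 1, mip (cofm (A t₀)) (B t₀)) = ((0:ℝ), (0:ℝ)) := by
        rw [ht₀.1, ht₀.2]; norm_num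
      have hgr := gronwall_zero (K := 2*κ+1) hFd hFb ht₀mem hF0
      have hxmem : x ∈ Set.Icc (t₀ - ε/2) (t₀ + ε/2) := by
        rw [Metric.mem_ball, Real.dist_eq] at hx
        have := abs_sub_lt_iff.1 hx
        constructor <;> linarith [this.1, this.2]
      have hfx := hgr x hxmem
      have h1 := congrArg Prod.fst hfx
      have h2 := congrArg Prod.snd hfx
      simp only [Prod.fst_zero, Prod.snd_zero] at h1 h2
      exact ⟨by linarith [sub_eq_zero.1 h1], h2⟩
    rcases isClopen_iff.1 ⟨hclosed, hopen⟩ with h | h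
    · exfalso
      have h0 : (0:ℝ) ∈ {t : ℝ | (A t).det = 1 ∧ mip (cofm (A t)) (B t) = 0} := by
        constructor
        · rw [hA0]; exact hdet
        · rw [hA0, hB0, mip_comm]; exact htan
      rw [h] at h0
      exact h0
    · intro t
      have : t ∈ {t : ℝ | (A t).det = 1 ∧ mip (cofm (A t)) (B t) = 0} := by
        rw [h]; trivial
      exact this
  have hdet1 : ∀ t, (A t).det = 1 := fun t => (hS t).1
  have hcof0 : ∀ t, mip (cofm (A t)) (B t) = 0 := fun t => (hS t).2
  have hm2 : ∀ t, (2:ℝ) ≤ mip (A t) (A t) := by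
    intro t
    have h := two_det_le_mip (A t)
    rw [hdet1 t] at h
    linarith
  constructor
  · -- ## Forward direction
    intro hrigid
    have hmc : ∀ t, mip (A t) (A t) = mip A₀ A₀ := by
      intro t
      have h1 := hrigid t
      rw [fnorm, fnorm] at h1
      have h2 := congrArg (fun x : ℝ => x * x) h1
      rwa [Real.mul_self_sqrt (mip_self_nonneg _), Real.mul_self_sqrt (mip_self_nonneg _)] at h2
    have hu0 : ∀ t, mip (A t) (B t) = 0 := by
      intro t
      have hconst : HasDerivAt (fun s => mip (A s) (A s)) 0 t := by
        have he : (fun s => mip (A s) (A s)) = fun _ => mip A₀ A₀ := funext hmc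
        rw [he]; exact hasDerivAt_const t _
      have h := hconst.unique (hmt t)
      linarith
    have hup0 : mip B₀ B₀ + mip A₀ (C 0) = 0 := by
      have hconst : HasDerivAt (fun s => mip (A s) (B s)) 0 0 := by
        have he : (fun s => mip (A s) (B s)) = fun _ => (0:ℝ) := funext hu0
        rw [he]; exact hasDerivAt_const 0 _
      have h := hconst.unique (hut 0)
      rw [hA0, hB0] at h
      linarith
    have hcp0 : mip (cofm B₀) B₀ + mip (cofm A₀) (C 0) = 0 := by
      have hconst : HasDerivAt (fun s => mip (cofm (A s)) (B s)) 0 0 := by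
        have he : (fun s => mip (cofm (A s)) (B s)) = fun _ => (0:ℝ) := funext hcof0
        rw [he]; exact hasDerivAt_const 0 _
      have h := hconst.unique (hct 0)
      rw [hA0, hB0] at h
      linarith
    have hC0 : C 0 = Lam κ A₀ B₀ • cofm A₀ - κ • A₀ := by rw [hCval 0, hA0, hB0]
    have e1 : mip B₀ B₀ + 2 * Lam κ A₀ B₀ - κ * mip A₀ A₀ = 0 := by
      rw [hC0, mip_smul_sub, mip_self_cof, hdet] at hup0
      linarith
    have e2 : 2 * B₀.det + Lam κ A₀ B₀ * mip A₀ A₀ - 2 * κ = 0 := by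
      rw [hC0, mip_smul_sub, mip_cof_cof, mip_cof_self, mip_cof_self, hdet] at hcp0
      linarith
    have hu00 : mip A₀ B₀ = 0 := by
      have h := hu0 0; rwa [hA0, hB0] at h
    have hcof00 : mip (cofm A₀) B₀ = 0 := by rw [mip_comm]; exact htan
    have hPne : ((1:ℝ)/2) * mip A₀ A₀ + 1 ≠ 0 :=
      ne_of_gt (by linarith : (0:ℝ) < (1/2) * mip A₀ A₀ + 1)
    have hQne : ((1:ℝ)/2) * mip A₀ A₀ - 1 ≠ 0 :=
      ne_of_gt (by linarith : (0:ℝ) < (1/2) * mip A₀ A₀ - 1)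
    have hX3sq : X3 A₀ B₀ ^ 2 = (1/2 * mip A₀ A₀ + 1) * (1/2 * mip B₀ B₀ + B₀.det) := by
      have h := lagrange_plus A₀ B₀
      rw [hdet, hu00, hcof00] at h
      simp only [X3]
      linear_combination -h
    have hX2sq : X2 A₀ B₀ ^ 2 = (1/2 * mip A₀ A₀ - 1) * (1/2 * mip B₀ B₀ - B₀.det) := by
      have h := lagrange_minus A₀ B₀
      rw [hdet, hu00, hcof00] at h
      simp only [X2]
      linear_combination -h
    constructor
    · simp only [X1]
      rw [hX3sq, hX2sq, mul_div_cancel_left₀ _ hQne, mul_div_cancel_left₀ _ hPne]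
      ring
    · have key : (1/2 * mip B₀ B₀ - B₀.det) * (1/2 * mip A₀ A₀ + 1)
          + ((1/2) * mip A₀ A₀ - 1) * (1/2 * mip B₀ B₀ + B₀.det)
          = 2*κ*(((1/2) * mip A₀ A₀ - 1)*((1/2) * mip A₀ A₀ + 1)) := by
        linear_combination (mip A₀ A₀ / 2) * e1 - e2
      rw [hX3sq, hX2sq, sq ((1/2) * mip A₀ A₀ - 1), sq ((1/2) * mip A₀ A₀ + 1),
        mul_div_mul_left _ _ hQne, mul_div_mul_left _ _ hPne,
        div_add_div _ _ hQne hPne, div_eq_iff (mul_ne_zero hQne hPne)]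
      linear_combination key
  · -- ## Backward direction
    rintro ⟨h1, h2⟩
    have hPpos : (0:ℝ) < (1/2) * mip A₀ A₀ + 1 := by linarith
    have hQpos : (0:ℝ) < (1/2) * mip A₀ A₀ - 1 := by linarith
    have hPne := ne_of_gt hPpos
    have hQne := ne_of_gt hQpos
    have hm₀pos : (0:ℝ) < mip A₀ A₀ := by linarith
    have hdet' : A₀ 0 0 * A₀ 1 1 - A₀ 0 1 * A₀ 1 0 = 1 := by
      rw [← Matrix.det_fin_two]; exact hdet
    set φv := X3 A₀ B₀ / ((1/2) * mip A₀ A₀ + 1) with hφv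
    set ψv := X2 A₀ B₀ / ((1/2) * mip A₀ A₀ - 1) with hψv
    have hφψsq : φv^2 + ψv^2 = 2*κ := by
      rw [hφv, hψv, div_pow, div_pow]
      linarith [h2]
    set av := (φv + ψv)/2 with hav
    set bv := (φv - ψv)/2 with hbv
    have hκeq : av^2 + bv^2 = κ := by
      rw [hav, hbv]
      linear_combination hφψsq / 2
    have hmipBB : mip B₀ B₀ = X2 A₀ B₀^2/((1/2) * mip A₀ A₀ - 1)
        + X3 A₀ B₀^2/((1/2) * mip A₀ A₀ + 1) := by
      have h1' := h1
      simp only [X1] at h1'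
      linarith
    have hX3r : (1/2) * mip (Zm * A₀ + A₀ * Zm) B₀ = X3 A₀ B₀ := rfl
    have hX2r : (1/2) * mip (Zm * A₀ - A₀ * Zm) B₀ = X2 A₀ B₀ := rfl
    have hEE := Eexp A₀ B₀ φv ψv hdet
    rw [hX3r, hX2r, ← hav, ← hbv] at hEE
    have hφX3 : φv * X3 A₀ B₀ = X3 A₀ B₀^2/((1/2) * mip A₀ A₀ + 1) := by
      rw [hφv]; ring
    have hψX2 : ψv * X2 A₀ B₀ = X2 A₀ B₀^2/((1/2) * mip A₀ A₀ - 1) := by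
      rw [hψv]; ring
    have hφ2P : φv^2*((1/2) * mip A₀ A₀ + 1) = X3 A₀ B₀^2/((1/2) * mip A₀ A₀ + 1) := by
      rw [hφv, div_pow, pow_two ((1/2) * mip A₀ A₀ + 1), ← div_div,
        div_mul_cancel₀ _ hPne]
    have hψ2Q : ψv^2*((1/2) * mip A₀ A₀ - 1) = X2 A₀ B₀^2/((1/2) * mip A₀ A₀ - 1) := by
      rw [hψv, div_pow, pow_two ((1/2) * mip A₀ A₀ - 1), ← div_div,
        div_mul_cancel₀ _ hQne]
    have hEzero : mip (B₀ - av • (Zm * A₀) - bv • (A₀ * Zm))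
        (B₀ - av • (Zm * A₀) - bv • (A₀ * Zm)) = 0 := by
      rw [hEE, hmipBB]
      linarith [hφX3, hψX2, hφ2P, hψ2Q]
    have hB₀eq : B₀ = av • (Zm * A₀) + bv • (A₀ * Zm) := by
      have h := mip_self_eq_zero hEzero
      rw [sub_sub, sub_eq_zero] at h
      exact h
    set Ar := fun s : ℝ => Um (av*s) * A₀ * Um (bv*s) with hAr
    have hAr0 : Ar 0 = A₀ := by
      show Um (av*0) * A₀ * Um (bv*0) = A₀
      rw [mul_zero, mul_zero, Um_zero, one_mul, mul_one]
    have hArd : ∀ s, HasDerivAt Ar (av • (Zm * Ar s) + bv • (Ar s * Zm)) s := by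
      intro s
      have h1' : HasDerivAt Ar ((av • (Zm * Um (av*s)) * A₀ + Um (av*s) * 0) * Um (bv*s)
          + (Um (av*s) * A₀) * (bv • (Zm * Um (bv*s)))) s :=
        ((hasDerivAt_Um av s).matmul (hasDerivAt_const s A₀)).matmul (hasDerivAt_Um bv s)
      show HasDerivAt Ar (av • (Zm * (Um (av*s) * A₀ * Um (bv*s)))
        + bv • ((Um (av*s) * A₀ * Um (bv*s)) * Zm)) s
      rw [← Ar_deriv_eq]
      exact h1'
    set Arp := fun s : ℝ => av • (Zm * Ar s) + bv • (Ar s * Zm) with hArpdef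
    have hArp0 : Arp 0 = B₀ := by
      show av • (Zm * Ar 0) + bv • (Ar 0 * Zm) = B₀
      rw [hAr0]
      exact hB₀eq.symm
    have hArpd : ∀ s, HasDerivAt Arp
        (-(av^2+bv^2) • Ar s + (2*av*bv) • (Zm * Ar s * Zm)) s := by
      intro s
      have hz : HasDerivAt (fun r => Zm * Ar r)
          ((0:M2) * Ar s + Zm * (av • (Zm * Ar s) + bv • (Ar s * Zm))) s :=
        (hasDerivAt_const s Zm).matmul (hArd s)
      have hz2 : HasDerivAt (fun r => Ar r * Zm)
          ((av • (Zm * Ar s) + bv • (Ar s * Zm)) * Zm + Ar s * (0:M2)) s :=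
        (hArd s).matmul (hasDerivAt_const s Zm)
      have ha' : HasDerivAt (fun r => av • (Zm * Ar r))
          ((0:ℝ) • (Zm * Ar s)
            + av • ((0:M2) * Ar s + Zm * (av • (Zm * Ar s) + bv • (Ar s * Zm)))) s :=
        (hasDerivAt_const s av).smulmat hz
      have hb' : HasDerivAt (fun r => bv • (Ar r * Zm))
          ((0:ℝ) • (Ar s * Zm)
            + bv • ((av • (Zm * Ar s) + bv • (Ar s * Zm)) * Zm + Ar s * (0:M2))) s :=
        (hasDerivAt_const s bv).smulmat hz2
      have hsum : HasDerivAt Arp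
          (((0:ℝ) • (Zm * Ar s)
            + av • ((0:M2) * Ar s + Zm * (av • (Zm * Ar s) + bv • (Ar s * Zm))))
          + ((0:ℝ) • (Ar s * Zm)
            + bv • ((av • (Zm * Ar s) + bv • (Ar s * Zm)) * Zm + Ar s * (0:M2)))) s :=
        ha'.add hb'
      rw [Arpp_eq av bv (Ar s)]
      exact hsum
    have hArB' : ∀ s, Arp s = Um (av*s) * (av • (Zm * A₀) + bv • (A₀ * Zm)) * Um (bv*s) := by
      intro s
      show av • (Zm * (Um (av*s) * A₀ * Um (bv*s)))
        + bv • ((Um (av*s) * A₀ * Um (bv*s)) * Zm) = _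
      exact Arp_eq av bv s A₀
    have hmipAr : ∀ s, mip (Ar s) (Ar s) = mip A₀ A₀ := by
      intro s
      show mip (Um (av*s) * A₀ * Um (bv*s)) (Um (av*s) * A₀ * Um (bv*s)) = mip A₀ A₀
      rw [mip_UmR, mip_UmL]
    have hm2Ar : ∀ s, (2:ℝ) ≤ mip (Ar s) (Ar s) := by
      intro s; rw [hmipAr s]; linarith
    have hdetArp : ∀ s, (Arp s).det = κ + av*bv*mip A₀ A₀ := by
      intro s
      rw [hArB' s, Matrix.det_mul, Matrix.det_mul, det_Um, det_Um, one_mul, mul_one]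
      rw [det_comb, hdet, mul_one, hκeq]
    have hLamAr : ∀ s, Lam κ (Ar s) (Arp s) = -(2*av*bv) := by
      intro s
      rw [Lam, hdetArp s, hmipAr s]
      field_simp
      ring
    have hodeAr : ∀ s, -(av^2+bv^2) • Ar s + (2*av*bv) • (Zm * Ar s * Zm)
        = Lam κ (Ar s) (Arp s) • cofm (Ar s) - κ • Ar s := by
      intro s
      rw [hLamAr s, zmz_cof, ← hκeq]
      module
    have hArd' : ∀ s, HasDerivAt Ar (Arp s) s := fun s => hArd s
    clear_value φv ψv av bv Ar Arp
    -- ## Gronwall uniqueness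
    intro t
    have habs0 := abs_nonneg t
    have hAcont : ContinuousOn A (Set.Icc (-(|t|+1)) (|t|+1)) :=
      fun s _ => ((hAt s).continuousAt).continuousWithinAt
    have hBcont : ContinuousOn B (Set.Icc (-(|t|+1)) (|t|+1)) :=
      fun s _ => ((hBt s).continuousAt).continuousWithinAt
    have hArcont : ContinuousOn Ar (Set.Icc (-(|t|+1)) (|t|+1)) :=
      fun s _ => ((hArd s).continuousAt).continuousWithinAt
    have hArpcont : ContinuousOn Arp (Set.Icc (-(|t|+1)) (|t|+1)) :=
      fun s _ => ((hArpd s).continuousAt).continuousWithinAt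
    obtain ⟨R1, hR1⟩ := (isCompact_Icc).exists_bound_of_continuousOn hAcont
    obtain ⟨R2, hR2⟩ := (isCompact_Icc).exists_bound_of_continuousOn hBcont
    obtain ⟨R3, hR3⟩ := (isCompact_Icc).exists_bound_of_continuousOn hArcont
    obtain ⟨R4, hR4⟩ := (isCompact_Icc).exists_bound_of_continuousOn hArpcont
    obtain ⟨R, hR1', hbA, hbB, hbAr, hbArp⟩ :
        ∃ R : ℝ, 1 ≤ R ∧ (∀ s ∈ Set.Icc (-(|t|+1)) (|t|+1), ‖A s‖ ≤ R)
          ∧ (∀ s ∈ Set.Icc (-(|t|+1)) (|t|+1), ‖B s‖ ≤ R)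
          ∧ (∀ s ∈ Set.Icc (-(|t|+1)) (|t|+1), ‖Ar s‖ ≤ R)
          ∧ (∀ s ∈ Set.Icc (-(|t|+1)) (|t|+1), ‖Arp s‖ ≤ R) := by
      refine ⟨max 1 (max (max R1 R2) (max R3 R4)), le_max_left _ _, ?_, ?_, ?_, ?_⟩ <;>
        intro s hs
      · exact (hR1 s hs).trans (le_trans (le_trans (le_max_left _ _) (le_max_left _ _))
          (le_max_right _ _))
      · exact (hR2 s hs).trans (le_trans (le_trans (le_max_right _ _) (le_max_left _ _))
          (le_max_right _ _))
      · exact (hR3 s hs).trans (le_trans (le_trans (le_max_left _ _) (le_max_right _ _))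
          (le_max_right _ _))
      · exact (hR4 s hs).trans (le_trans (le_trans (le_max_right _ _) (le_max_right _ _))
          (le_max_right _ _))
    have hR0 : (0:ℝ) ≤ R := by linarith
    have hK₀0 : (0:ℝ) ≤ (κ + 2*R^2) + 8*R^4 + 4*R^2*(κ+2*R^2) + κ := by
      have t1 : (0:ℝ) ≤ κ + 2*R^2 := add_nonneg hκ (by positivity)
      have t3 : (0:ℝ) ≤ 4*R^2*(κ+2*R^2) := mul_nonneg (by positivity) t1
      have t2 : (0:ℝ) ≤ 8*R^4 := by positivity
      linarith
    have hWd : ∀ s ∈ Set.Icc (-(|t|+1)) (|t|+1),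
        HasDerivAt (fun r => (A r - Ar r, B r - Arp r))
          ((fun s => (B s - Arp s,
            C s - (-(av^2+bv^2) • Ar s + (2*av*bv) • (Zm * Ar s * Zm)))) s) s :=
      fun s _ => ((hAt s).sub (hArd' s)).prodMk ((hBt s).sub (hArpd s))
    have hbound : ∀ s ∈ Set.Icc (-(|t|+1)) (|t|+1),
        ‖(fun s => (B s - Arp s,
            C s - (-(av^2+bv^2) • Ar s + (2*av*bv) • (Zm * Ar s * Zm)))) s‖
          ≤ (2*((κ + 2*R^2) + 8*R^4 + 4*R^2*(κ+2*R^2) + κ)+1)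
            * ‖(A s - Ar s, B s - Arp s)‖ := by
      intro s hs
      simp only
      rw [Prod.norm_def, Prod.norm_def]
      have hmx0 : (0:ℝ) ≤ max ‖A s - Ar s‖ ‖B s - Arp s‖ :=
        le_trans (norm_nonneg _) (le_max_left _ _)
      apply max_le
      · have hle := le_max_right ‖A s - Ar s‖ ‖B s - Arp s‖
        linarith [mul_nonneg hK₀0 hmx0]
      · have hCs : C s - (-(av^2+bv^2) • Ar s + (2*av*bv) • (Zm * Ar s * Zm))
            = Lam κ (A s) (B s) • cofm (A s - Ar s)
              + (Lam κ (A s) (B s) - Lam κ (Ar s) (Arp s)) • cofm (Ar s)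
              - κ • (A s - Ar s) := by
          rw [hCval s, hodeAr s, cofm_sub]
          module
        rw [hCs]
        have hn1 : ‖Lam κ (A s) (B s) • cofm (A s - Ar s)
            + (Lam κ (A s) (B s) - Lam κ (Ar s) (Arp s)) • cofm (Ar s)
            - κ • (A s - Ar s)‖
            ≤ ‖Lam κ (A s) (B s) • cofm (A s - Ar s)‖
              + ‖(Lam κ (A s) (B s) - Lam κ (Ar s) (Arp s)) • cofm (Ar s)‖
              + ‖κ • (A s - Ar s)‖ :=
          (norm_sub_le _ _).trans (add_le_add_left (norm_add_le _ _) _)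
        have hb1 : ‖Lam κ (A s) (B s) • cofm (A s - Ar s)‖ ≤ (κ + 2*R^2) * ‖A s - Ar s‖ := by
          rw [norm_smul, Real.norm_eq_abs, norm_cofm]
          apply mul_le_mul _ le_rfl (norm_nonneg _) (by positivity)
          have hL := Lam_abs_le hκ (X := A s) (Y := B s) (hm2 s)
          have hB2 : ‖B s‖^2 ≤ R^2 := by nlinarith [hbB s hs, norm_nonneg (B s)]
          linarith
        have hb2 : ‖(Lam κ (A s) (B s) - Lam κ (Ar s) (Arp s)) • cofm (Ar s)‖
            ≤ (8*R^3*‖B s - Arp s‖ + 4*R*(κ+2*R^2)*‖A s - Ar s‖) * R := by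
          rw [norm_smul, Real.norm_eq_abs, norm_cofm]
          apply mul_le_mul _ (hbAr s hs) (norm_nonneg _) (by positivity)
          exact Lam_diff_le hκ hR1' (hm2 s) (hm2Ar s) (hbA s hs) (hbAr s hs) (hbB s hs)
            (hbArp s hs)
        have hb3 : ‖κ • (A s - Ar s)‖ ≤ κ * ‖A s - Ar s‖ := by
          rw [norm_smul, Real.norm_eq_abs, abs_of_nonneg hκ]
        have hnn1 : (0:ℝ) ≤ ‖A s - Ar s‖ := norm_nonneg _
        have hnn2 : (0:ℝ) ≤ ‖B s - Arp s‖ := norm_nonneg _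
        have hfin : ‖Lam κ (A s) (B s) • cofm (A s - Ar s)
            + (Lam κ (A s) (B s) - Lam κ (Ar s) (Arp s)) • cofm (Ar s)
            - κ • (A s - Ar s)‖
            ≤ ((κ + 2*R^2) + 8*R^4 + 4*R^2*(κ+2*R^2) + κ)
              * (‖A s - Ar s‖ + ‖B s - Arp s‖) := by
          have t1' : (0:ℝ) ≤ κ + 2*R^2 := add_nonneg hκ (by positivity)
          have p1 : (0:ℝ) ≤ 8*R^4*‖A s - Ar s‖ := by positivity
          have p2 : (0:ℝ) ≤ (κ+2*R^2)*‖B s - Arp s‖ := mul_nonneg t1' hnn2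
          have p3 : (0:ℝ) ≤ 4*R^2*(κ+2*R^2)*‖B s - Arp s‖ :=
            mul_nonneg (mul_nonneg (by positivity) t1') hnn2
          have p4 : (0:ℝ) ≤ κ*‖B s - Arp s‖ := mul_nonneg hκ hnn2
          linarith [hn1, hb1, hb2, hb3, p1, p2, p3, p4]
        have hle1 : ‖A s - Ar s‖ ≤ max ‖A s - Ar s‖ ‖B s - Arp s‖ := le_max_left _ _
        have hle2 : ‖B s - Arp s‖ ≤ max ‖A s - Ar s‖ ‖B s - Arp s‖ := le_max_right _ _
        have m1 := mul_le_mul_of_nonneg_left hle1 hK₀0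
        have m2 := mul_le_mul_of_nonneg_left hle2 hK₀0
        linarith
    have h0mem : (0:ℝ) ∈ Set.Icc (-(|t|+1)) (|t|+1) :=
      ⟨by linarith, by linarith⟩
    have hW0 : ((A 0 - Ar 0, B 0 - Arp 0) : M2 × M2) = 0 := by
      rw [hA0, hAr0, hB0, hArp0]
      simp
    have hres := gronwall_zero hWd hbound h0mem hW0 t
      ⟨by linarith [neg_abs_le t], by linarith [le_abs_self t]⟩
    have hAt' : A t = Ar t := by
      have h := congrArg Prod.fst hres
      simp only [Prod.fst_zero] at h
      exact sub_eq_zero.1 h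
    rw [fnorm, fnorm, hAt', hmipAr t]
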